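/- Let $(W_i)_{i \in [n]}$ be iid nonnegative random variables with regularly varying tail of index $-\alpha$, $\alpha > 1$: $\mathbb{P}(W > w) = L(w)w^{-\alpha}$ for $w \geq \underline{w} > 0$. For every $C > 0$ and $R > 0$ with $\mathbb{E}[W\mathbf{1}\{W \geq R\}] > 0$, there exists $\phi_0 > 0$ such that for all $\phi \in (0, \phi_0)$: $\mathbb{P}\big(\sum_{i=1}^n W_i \mathbf{1}\{W_i \in [R, \phi n)\} > 2\,\mathbb{E}[W\mathbf{1}\{W \geq R\}]\, n\big) = o(n^{-C})$ as $n \to \infty$. -/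

import Mathlib

open MeasureTheory Real Filter

lemma aux_exp_quad {x : ℝ} (hx : 0 ≤ x) : Real.exp x ≤ 1 + x + 4 * x ^ 2 * Real.exp x := by
  rcases le_or_gt x (1/2) with h | h
  · have h2 : (1 - x) * Real.exp x ≤ 1 := by
      have h3 : -x + 1 ≤ Real.exp (-x) := Real.add_one_le_exp (-x)
      have h4 : Real.exp (-x) * Real.exp x = 1 := by
        rw [← Real.exp_add]; simp
      nlinarith [Real.exp_pos x]
    nlinarith [Real.exp_pos x, Real.one_le_exp hx, sq_nonneg x]
  · nlinarith [Real.exp_pos x, mul_nonneg (by nlinarith : (0:ℝ) ≤ 4*x^2 - 1) (Real.exp_pos x).le]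

lemma aux_sq_bound {x b y Λ i : ℝ} (hx0 : 0 ≤ x) (hxΛ : x ≤ Λ) (hxy : x ≤ y)
    (hy0 : 0 ≤ y) (hb0 : 0 < b) (hi0 : 0 ≤ i) (hcase : x ≤ b ∨ i = 1) :
    x^2 ≤ b*y + Λ^2*i := by
  rcases hcase with h | h
  · nlinarith
  · rw [h]; nlinarith

lemma aux_ptw {t Λ b x y i : ℝ} (ht : 0 ≤ t) (hx0 : 0 ≤ x) (hxΛ : x ≤ Λ) (hxy : x ≤ y)
    (hb0 : 0 < b) (hi0 : 0 ≤ i) (hsq : x^2 ≤ b*y + Λ^2*i) :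
    Real.exp (t*x) ≤ 1 + t*y + 4*t^2*Real.exp (t*Λ)*(b*y + Λ^2*i) := by
  have e1 : Real.exp (t*x) ≤ 1 + t*x + 4*(t*x)^2 * Real.exp (t*x) :=
    aux_exp_quad (mul_nonneg ht hx0)
  have e2 : Real.exp (t*x) ≤ Real.exp (t*Λ) :=
    Real.exp_le_exp.2 (mul_le_mul_of_nonneg_left hxΛ ht)
  have e3 : 4*(t*x)^2 * Real.exp (t*x) ≤ 4*t^2*Real.exp (t*Λ) * x^2 := by
    have := mul_le_mul_of_nonneg_left e2 (by positivity : (0:ℝ) ≤ 4*(t*x)^2)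
    nlinarith [this]
  have e4 : t*x ≤ t*y := mul_le_mul_of_nonneg_left hxy ht
  have e5 : 4*t^2*Real.exp (t*Λ) * x^2 ≤ 4*t^2*Real.exp (t*Λ) * (b*y + Λ^2*i) :=
    mul_le_mul_of_nonneg_left hsq (by positivity)
  linarith

lemma aux_logsq {δ : ℝ} (hδ : δ < 0) :
    Tendsto (fun x : ℝ => (Real.log x) ^ 2 * x ^ δ) atTop (nhds 0) := by
  have hr : (0:ℝ) < -δ/2 := by linarith
  have h := (isLittleO_log_rpow_atTop hr).tendsto_div_nhds_zero
  have h2 : Tendsto (fun x : ℝ => (Real.log x / x ^ (-δ/2)) * (Real.log x / x ^ (-δ/2)))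
      atTop (nhds 0) := by simpa using h.mul h
  refine h2.congr' ?_
  filter_upwards [eventually_ge_atTop (1:ℝ)] with x hx
  have hx0 : (0:ℝ) < x := by linarith
  have hsum : x ^ (-δ/2) * x ^ (-δ/2) = x ^ (-δ) := by
    rw [← Real.rpow_add hx0]; ring_nf
  rw [div_mul_div_comm, hsum, div_eq_iff (Real.rpow_pos_of_pos hx0 _).ne', mul_assoc,
    ← Real.rpow_add hx0]
  simp [sq]


lemma aux_tail {T L : ℝ → ℝ} {α a w₀ : ℝ} (hw₀ : 0 < w₀) (ha : 0 < a) (haα : a < α)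
    (hmono : ∀ ⦃x y : ℝ⦄, w₀ ≤ x → x ≤ y → T y ≤ T x)
    (hT : ∀ w, w₀ ≤ w → T w = L w * w ^ (-α))
    (hLpos : ∀ x, 0 < L x)
    (hL2 : Tendsto (fun x => L (2*x) / L x) atTop (nhds 1)) :
    ∃ K > (0:ℝ), ∃ x₁ : ℝ, (max w₀ 1 ≤ x₁) ∧ ∀ x, x₁ ≤ x → T x ≤ K * x ^ (-a) := by
  have h2a : (1:ℝ) < 2 ^ (α - a) :=
    (Real.one_lt_rpow_iff_of_pos (by norm_num)).2 (Or.inl ⟨one_lt_two, by linarith⟩)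
  obtain ⟨x₀, hx₀⟩ := eventually_atTop.1 (hL2.eventually_le_const h2a)
  set x₁ : ℝ := max (max w₀ 1) x₀ with hx₁def
  have hx₁w : w₀ ≤ x₁ := le_trans (le_max_left _ _) (le_max_left _ _)
  have hx₁1 : (1:ℝ) ≤ x₁ := le_trans (le_max_right _ _) (le_max_left _ _)
  have hx₁0 : (0:ℝ) < x₁ := lt_of_lt_of_le one_pos hx₁1
  have hx₁x₀ : x₀ ≤ x₁ := le_max_right _ _
  -- induction step
  have hind : ∀ k : ℕ, L ((2:ℝ)^k * x₁) ≤ 2 ^ ((k:ℝ)*(α-a)) * L x₁ := by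
    intro k
    induction k with
    | zero => simp
    | succ k ih =>
      push_cast
      have hge : x₀ ≤ (2:ℝ)^k * x₁ :=
        le_trans hx₁x₀ (le_mul_of_one_le_left hx₁0.le (one_le_pow₀ one_le_two))
      have hstep : L (2 * ((2:ℝ)^k * x₁)) ≤ 2 ^ (α - a) * L ((2:ℝ)^k * x₁) := by
        have := hx₀ _ hge
        rw [div_le_iff₀ (hLpos _)] at this
        linarith
      have heq : (2:ℝ)^(k+1) * x₁ = 2 * ((2:ℝ)^k * x₁) := by ring
      calc L ((2:ℝ)^(k+1) * x₁) = L (2 * ((2:ℝ)^k * x₁)) := by rw [heq]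
        _ ≤ 2 ^ (α - a) * L ((2:ℝ)^k * x₁) := hstep
        _ ≤ 2 ^ (α - a) * (2 ^ ((k:ℝ)*(α-a)) * L x₁) := by
            exact mul_le_mul_of_nonneg_left ih (Real.rpow_nonneg (by norm_num) _)
        _ = 2 ^ (((k:ℝ)+1)*(α-a)) * L x₁ := by
            rw [← mul_assoc, ← Real.rpow_add two_pos]
            ring_nf
  refine ⟨L x₁ * x₁ ^ (-α) * (2*x₁) ^ a,
    mul_pos (mul_pos (hLpos x₁) (Real.rpow_pos_of_pos hx₁0 _))
      (Real.rpow_pos_of_pos (by linarith) _), x₁, max_le hx₁w hx₁1, ?_⟩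
  intro x hx
  have hx0 : (0:ℝ) < x := lt_of_lt_of_le hx₁0 hx
  set k : ℕ := ⌊Real.logb 2 (x/x₁)⌋₊ with hk
  have hdiv1 : (1:ℝ) ≤ x / x₁ := (one_le_div hx₁0).2 hx
  have hdiv0 : (0:ℝ) < x / x₁ := lt_of_lt_of_le one_pos hdiv1
  have hlogb0 : 0 ≤ Real.logb 2 (x/x₁) := Real.logb_nonneg one_lt_two hdiv1
  have hk1 : (2:ℝ)^(k:ℝ) ≤ x / x₁ := by
    calc (2:ℝ)^(k:ℝ) ≤ (2:ℝ)^(Real.logb 2 (x/x₁)) :=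
          Real.rpow_le_rpow_of_exponent_le one_le_two (Nat.floor_le hlogb0)
      _ = x / x₁ := Real.rpow_logb (by norm_num) (by norm_num) hdiv0
  have hk2 : x / x₁ < (2:ℝ)^((k:ℝ)+1) := by
    calc x / x₁ = (2:ℝ)^(Real.logb 2 (x/x₁)) := (Real.rpow_logb (by norm_num) (by norm_num) hdiv0).symm
      _ < (2:ℝ)^((k:ℝ)+1) :=
          Real.rpow_lt_rpow_of_exponent_lt one_lt_two (Nat.lt_floor_add_one _)
  have h2k0 : (0:ℝ) < (2:ℝ)^(k:ℝ) := Real.rpow_pos_of_pos two_pos _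
  have h2kx : (2:ℝ)^(k:ℝ) * x₁ ≤ x := by
    rw [← le_div_iff₀ hx₁0]; exact hk1
  have hw2k : w₀ ≤ (2:ℝ)^(k:ℝ) * x₁ :=
    le_trans hx₁w (le_mul_of_one_le_left hx₁0.le (Real.one_le_rpow one_le_two (by positivity)))
  have hlow : x / (2*x₁) ≤ (2:ℝ)^(k:ℝ) := by
    rw [div_le_iff₀ (by positivity)]
    have := hk2
    rw [Real.rpow_add two_pos, Real.rpow_one, div_lt_iff₀ hx₁0] at this
    nlinarith
  -- main chain
  have hmain : T x ≤ 2 ^ ((k:ℝ)*(α-a)) * L x₁ * ((2:ℝ)^(k:ℝ) * x₁) ^ (-α) := by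
    calc T x ≤ T ((2:ℝ)^(k:ℝ) * x₁) := hmono hw2k h2kx
      _ = L ((2:ℝ)^(k:ℝ) * x₁) * ((2:ℝ)^(k:ℝ) * x₁) ^ (-α) := hT _ hw2k
      _ ≤ 2 ^ ((k:ℝ)*(α-a)) * L x₁ * ((2:ℝ)^(k:ℝ) * x₁) ^ (-α) := by
          apply mul_le_mul_of_nonneg_right _ (Real.rpow_nonneg (mul_nonneg h2k0.le hx₁0.le) _)
          rw [show (2:ℝ)^(k:ℝ) = (2:ℝ)^k from Real.rpow_natCast 2 k]
          exact hind k
  have hsplit : ((2:ℝ)^(k:ℝ) * x₁) ^ (-α) = ((2:ℝ)^(k:ℝ))^(-α) * x₁ ^ (-α) :=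
    Real.mul_rpow h2k0.le hx₁0.le
  have hcomb : 2 ^ ((k:ℝ)*(α-a)) * ((2:ℝ)^(k:ℝ))^(-α) = ((2:ℝ)^(k:ℝ))^(-a) := by
    rw [← Real.rpow_mul (by norm_num : (0:ℝ) ≤ 2), ← Real.rpow_mul (by norm_num : (0:ℝ) ≤ 2),
      ← Real.rpow_add two_pos]
    ring_nf
  have hfin : ((2:ℝ)^(k:ℝ))^(-a) ≤ (2*x₁) ^ a * x ^ (-a) := by
    have h2 : ((2:ℝ)^(k:ℝ))^(-a) ≤ (x / (2*x₁)) ^ (-a) :=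
      Real.rpow_le_rpow_of_nonpos (div_pos hx0 (by linarith)) hlow (by linarith)
    have h3 : (x / (2*x₁)) ^ (-a) = (2*x₁) ^ a * x ^ (-a) := by
      rw [Real.div_rpow hx0.le (by positivity), Real.rpow_neg hx0.le,
        Real.rpow_neg (by linarith : (0:ℝ) ≤ 2*x₁)]
      field_simp
    rw [← h3]; exact h2
  calc T x ≤ 2 ^ ((k:ℝ)*(α-a)) * L x₁ * ((2:ℝ)^(k:ℝ) * x₁) ^ (-α) := hmain
    _ = L x₁ * x₁ ^ (-α) * (2 ^ ((k:ℝ)*(α-a)) * ((2:ℝ)^(k:ℝ))^(-α)) := by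
        rw [hsplit]; ring
    _ = L x₁ * x₁ ^ (-α) * ((2:ℝ)^(k:ℝ))^(-a) := by rw [hcomb]
    _ ≤ L x₁ * x₁ ^ (-α) * ((2*x₁) ^ a * x ^ (-a)) := by
        exact mul_le_mul_of_nonneg_left hfin
          (mul_nonneg (hLpos x₁).le (Real.rpow_nonneg hx₁0.le _))
    _ = L x₁ * x₁ ^ (-α) * (2*x₁) ^ a * x ^ (-a) := by ring


set_option maxHeartbeats 1000000 in
/-- For iid nonnegative `(W_i)` with regularly varying tail of index
`-α`, `α > 1` (`P(W > w) = L(w) w^{-α}` for `w ≥ w₀ > 0`), for every `C > 0` and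
`R > 0` with `E[W 1{W ≥ R}] > 0` there exists `φ₀ > 0` such that for all
`φ ∈ (0, φ₀)`:
`P(∑_{i<n} W_i 1{W_i ∈ [R, φ n)} > 2 E[W 1{W ≥ R}] n) = o(n^{-C})`. -/
theorem stmt_18 {Ω : Type*} [MeasurableSpace Ω] (μ : Measure Ω) [IsProbabilityMeasure μ]
    (W : ℕ → Ω → ℝ) (hmeas : ∀ i, Measurable (W i))
    (hindep : ProbabilityTheory.iIndepFun W μ)
    (hident : ∀ i, Measure.map (W i) μ = Measure.map (W 0) μ)
    (α w₀ : ℝ) (hα : 1 < α) (hw₀ : 0 < w₀)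
    (hWlb : ∀ i, ∀ᵐ ω ∂μ, w₀ ≤ W i ω)
    (L : ℝ → ℝ) (hLpos : ∀ x : ℝ, 0 < L x)
    (hL : ∀ c : ℝ, 0 < c →
        Filter.Tendsto (fun x : ℝ => L (c * x) / L x) Filter.atTop (nhds 1))
    (htail : ∀ w : ℝ, w₀ ≤ w → (μ {ω | w < W 0 ω}).toReal = L w * w ^ (-α))
    (C R : ℝ) (hC : 0 < C) (hR : 0 < R)
    (hpos : 0 < ∫ ω, (if R ≤ W 0 ω then W 0 ω else 0) ∂μ) :
    ∃ φ₀ > (0:ℝ), ∀ φ ∈ Set.Ioo (0:ℝ) φ₀,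
      Filter.Tendsto (fun n : ℕ => (n : ℝ) ^ C *
          (μ {ω | 2 * (∫ ω', (if R ≤ W 0 ω' then W 0 ω' else 0) ∂μ) * n <
              ∑ i ∈ Finset.range n,
                (if R ≤ W i ω ∧ W i ω < φ * n then W i ω else 0)}).toReal)
        Filter.atTop (nhds 0) := by
  classical
  set Y : Ω → ℝ := fun ω => if R ≤ W 0 ω then W 0 ω else 0 with hY_def
  set m : ℝ := ∫ ω, Y ω ∂μ with hm_def
  have hm : 0 < m := hpos
  have hYmeas : Measurable Y :=
    Measurable.ite (measurableSet_le measurable_const (hmeas 0)) (hmeas 0) measurable_const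
  have hY0 : ∀ ω, 0 ≤ Y ω := by
    intro ω
    by_cases h : R ≤ W 0 ω <;> simp [hY_def, h] <;> linarith
  have hYint : Integrable Y μ := by
    by_contra h
    rw [hm_def, integral_undef h] at hm
    exact lt_irrefl 0 hm
  -- parameters
  obtain ⟨a, ha1, haα⟩ : ∃ a : ℝ, 1 < a ∧ a < α := ⟨(1+α)/2, by linarith, by linarith⟩
  set c : ℝ := (a-1)/(2*(a+1)) with hc_def
  have hc0 : 0 < c := div_pos (by linarith) (by linarith)
  have hc2 : c * (2*(a+1)) = a - 1 := by
    rw [hc_def]; field_simp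
  have hc1 : c < 1 := by nlinarith
  have hkey : (1+c)/a < 1 - c := by
    rw [div_lt_iff₀ (by linarith)]
    nlinarith [mul_pos hc0 (show (0:ℝ) < a + 1 by linarith)]
  set β : ℝ := ((1+c)/a + (1-c))/2 with hβ_def
  have hβlow : (1+c)/a < β := by rw [hβ_def]; linarith
  have hβhigh : β < 1 - c := by rw [hβ_def]; linarith
  have hβpos : 0 < β :=
    lt_trans (div_pos (by linarith) (by linarith)) hβlow
  have hδ₁ : β + c - 1 < 0 := by linarith
  have hδ₂ : 1 + c - a*β < 0 := by
    have h1 : 1 + c < a * β := by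
      rw [div_lt_iff₀ (by linarith)] at hβlow; linarith [hβlow]
    linarith
  -- tail bound
  have hmono : ∀ ⦃x y : ℝ⦄, w₀ ≤ x → x ≤ y →
      (μ {ω | y < W 0 ω}).toReal ≤ (μ {ω | x < W 0 ω}).toReal := by
    intro x y _ hxy
    exact ENNReal.toReal_mono (measure_ne_top μ _)
      (measure_mono (fun ω h => lt_of_le_of_lt hxy h))
  obtain ⟨K, hK, x₁, hx₁, htail'⟩ :=
    aux_tail hw₀ (lt_trans one_pos ha1) haα hmono htail hLpos (hL 2 two_pos)
  have hx₁1 : (1:ℝ) ≤ x₁ := le_trans (le_max_right _ _) hx₁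
  have hx₁w : w₀ ≤ x₁ := le_trans (le_max_left _ _) hx₁
  -- the threshold
  refine ⟨c*m/(C+1), div_pos (mul_pos hc0 hm) (by linarith), fun φ hφ => ?_⟩
  obtain ⟨hφ0, hφ₀⟩ := hφ
  have hCφ : C + 1 < c*m/φ := by
    rw [lt_div_iff₀ hφ0]
    rw [lt_div_iff₀ (by linarith : (0:ℝ) < C + 1)] at hφ₀
    linarith
  -- asymptotic smallness of the error term
  have hA : Tendsto (fun n : ℕ => (4*c^2*m/φ^2) * (Real.log n)^2 * (n:ℝ)^(β+c-1)
      + (4*c^2*K) * (Real.log n)^2 * (n:ℝ)^(1+c-a*β)) atTop (nhds 0) := by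
    have t1 := (aux_logsq hδ₁).comp tendsto_natCast_atTop_atTop
    have t2 := (aux_logsq hδ₂).comp tendsto_natCast_atTop_atTop
    have h := (t1.const_mul (4*c^2*m/φ^2)).add (t2.const_mul (4*c^2*K))
    simp only [mul_zero, add_zero] at h
    refine h.congr (fun n => ?_)
    simp only [Function.comp]
    ring
  have hD_ev : ∀ᶠ n : ℕ in atTop, (4*c^2*m/φ^2) * (Real.log n)^2 * (n:ℝ)^(β+c-1)
      + (4*c^2*K) * (Real.log n)^2 * (n:ℝ)^(1+c-a*β) ≤ 1 :=
    hA.eventually_le_const one_pos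
  have hb_ev : ∀ᶠ n : ℕ in atTop, x₁ ≤ (n:ℝ)^β :=
    ((tendsto_rpow_atTop hβpos).comp tendsto_natCast_atTop_atTop).eventually_ge_atTop x₁
  -- squeeze
  apply squeeze_zero' (g := fun n : ℕ => Real.exp 1 * (n:ℝ)^(C - c*m/φ))
  · exact Eventually.of_forall fun n =>
      mul_nonneg (Real.rpow_nonneg (Nat.cast_nonneg n) C) ENNReal.toReal_nonneg
  · filter_upwards [eventually_ge_atTop 2, hb_ev, hD_ev] with n hn2 hbx hD1
    have hN2 : (2:ℝ) ≤ (n:ℝ) := by exact_mod_cast hn2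
    have hN0 : (0:ℝ) < (n:ℝ) := by linarith
    have hN1 : (1:ℝ) < (n:ℝ) := by linarith
    have hlogN : 0 < Real.log n := Real.log_pos hN1
    set t : ℝ := c * Real.log n / (φ * n) with ht_def
    have ht : 0 < t := div_pos (mul_pos hc0 hlogN) (mul_pos hφ0 hN0)
    set Λ : ℝ := φ * (n:ℝ) with hΛ_def
    have hΛ0 : 0 < Λ := mul_pos hφ0 hN0
    set b : ℝ := (n:ℝ)^β with hb_def
    have hb0 : 0 < b := Real.rpow_pos_of_pos hN0 β
    set f : ℝ → ℝ := fun x => if R ≤ x ∧ x < Λ then x else 0 with hf_def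
    have hset : MeasurableSet {x : ℝ | R ≤ x ∧ x < Λ} :=
      (measurableSet_le measurable_const measurable_id).inter
        (measurableSet_lt measurable_id measurable_const)
    have hfmeas : Measurable f := Measurable.ite hset measurable_id measurable_const
    set X : ℕ → Ω → ℝ := fun i => f ∘ W i with hX_def
    have hXmeas : ∀ i, Measurable (X i) := fun i => hfmeas.comp (hmeas i)
    have hX0 : ∀ i ω, 0 ≤ X i ω := by
      intro i ω
      simp only [hX_def, hf_def, Function.comp]
      split
      · next h => linarith [h.1]
      · exact le_refl 0
    have hXle : ∀ i ω, X i ω ≤ Λ := by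
      intro i ω
      simp only [hX_def, hf_def, Function.comp]
      split
      · next h => exact le_of_lt h.2
      · exact hΛ0.le
    have hXY : ∀ ω, X 0 ω ≤ Y ω := by
      intro ω
      simp only [hX_def, hf_def, hY_def, Function.comp]
      split
      · next h => simp [h.1]
      · next h =>
          by_cases h2 : R ≤ W 0 ω <;> simp [h2] <;> linarith
    have hXindep : ProbabilityTheory.iIndepFun X μ :=
      hindep.comp (fun _ => f) (fun _ => hfmeas)
    have hSmeas : Measurable (∑ i ∈ Finset.range n, X i) := by
      rw [Finset.sum_fn]
      exact Finset.measurable_sum _ (fun i _ => hXmeas i)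
    have hSle : ∀ ω, (∑ i ∈ Finset.range n, X i) ω ≤ n * Λ := by
      intro ω
      rw [Finset.sum_apply]
      calc ∑ i ∈ Finset.range n, X i ω ≤ ∑ _i ∈ Finset.range n, Λ :=
            Finset.sum_le_sum (fun i _ => hXle i ω)
        _ = n * Λ := by rw [Finset.sum_const, Finset.card_range, nsmul_eq_mul]
    have hSint : Integrable (fun ω => Real.exp (t * (∑ i ∈ Finset.range n, X i) ω)) μ := by
      refine (integrable_const (Real.exp (t * ((n:ℝ)*Λ)))).mono'
        ((hSmeas.const_mul t).exp.aestronglyMeasurable) (ae_of_all _ fun ω => ?_)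
      rw [Real.norm_eq_abs, abs_of_pos (Real.exp_pos _)]
      exact Real.exp_le_exp.2 (mul_le_mul_of_nonneg_left (hSle ω) ht.le)
    have chern := ProbabilityTheory.measure_ge_le_exp_mul_mgf
      (X := ∑ i ∈ Finset.range n, X i) (μ := μ) (t := t) (2*m*n) ht.le hSint
    -- identical distribution of truncated variables
    have hgmeas : Measurable fun x => Real.exp (t * f x) := (hfmeas.const_mul t).exp
    have hmgf_id : ∀ i, ProbabilityTheory.mgf (X i) μ t = ProbabilityTheory.mgf (X 0) μ t := by
      intro i
      show (∫ ω, Real.exp (t * X i ω) ∂μ) = ∫ ω, Real.exp (t * X 0 ω) ∂μ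
      calc (∫ ω, Real.exp (t * f (W i ω)) ∂μ)
          = ∫ x, Real.exp (t * f x) ∂(Measure.map (W i) μ) :=
            (integral_map (hmeas i).aemeasurable hgmeas.aestronglyMeasurable).symm
        _ = ∫ x, Real.exp (t * f x) ∂(Measure.map (W 0) μ) := by rw [hident i]
        _ = ∫ ω, Real.exp (t * f (W 0 ω)) ∂μ :=
            integral_map (hmeas 0).aemeasurable hgmeas.aestronglyMeasurable
    have hmgfS : ProbabilityTheory.mgf (∑ i ∈ Finset.range n, X i) μ t
        = (ProbabilityTheory.mgf (X 0) μ t)^n := by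
      rw [hXindep.mgf_sum hXmeas (Finset.range n),
        Finset.prod_congr rfl (fun i _ => hmgf_id i), Finset.prod_const, Finset.card_range]
    -- single mgf bound
    set I : Ω → ℝ := Set.indicator {ω | b < W 0 ω} (fun _ => 1) with hI_def
    have hIset : MeasurableSet {ω | b < W 0 ω} := measurableSet_lt measurable_const (hmeas 0)
    have hIint : Integrable I μ := (integrable_const 1).indicator hIset
    have hI0 : ∀ ω, 0 ≤ I ω := fun ω => Set.indicator_nonneg (fun _ _ => zero_le_one) ω
    have hptw : ∀ ω, Real.exp (t * X 0 ω)
        ≤ 1 + t * Y ω + 4*t^2*Real.exp (t*Λ) * (b * Y ω + Λ^2 * I ω) := by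
      intro ω
      have hcase : X 0 ω ≤ b ∨ I ω = 1 := by
        rcases le_or_gt (X 0 ω) b with hcb | hcb
        · exact Or.inl hcb
        · refine Or.inr ?_
          have hcond : R ≤ W 0 ω ∧ W 0 ω < Λ := by
            by_contra hcon
            have hz : X 0 ω = 0 := by
              simp only [hX_def, hf_def, Function.comp]
              exact if_neg hcon
            rw [hz] at hcb; exact absurd hcb (not_lt.2 hb0.le)
          have hXW : X 0 ω = W 0 ω := by
            simp only [hX_def, hf_def, Function.comp]
            exact if_pos hcond
          exact Set.indicator_of_mem (by rw [Set.mem_setOf_eq, ← hXW]; exact hcb) _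
      exact aux_ptw ht.le (hX0 0 ω) (hXle 0 ω) (hXY ω) hb0 (hI0 ω)
        (aux_sq_bound (hX0 0 ω) (hXle 0 ω) (hXY ω) (hY0 ω) hb0 (hI0 ω) hcase)
    have hX0int : Integrable (fun ω => Real.exp (t * X 0 ω)) μ := by
      refine (integrable_const (Real.exp (t * Λ))).mono'
        (((hXmeas 0).const_mul t).exp.aestronglyMeasurable) (ae_of_all _ fun ω => ?_)
      rw [Real.norm_eq_abs, abs_of_pos (Real.exp_pos _)]
      exact Real.exp_le_exp.2 (mul_le_mul_of_nonneg_left (hXle 0 ω) ht.le)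
    have hRHSint : Integrable
        (fun ω => 1 + t * Y ω + 4*t^2*Real.exp (t*Λ) * (b * Y ω + Λ^2 * I ω)) μ := by
      refine Integrable.add (Integrable.add (integrable_const 1) (hYint.const_mul t)) ?_
      exact ((hYint.const_mul b).add (hIint.const_mul (Λ^2))).const_mul _
    have hIval : ∫ ω, I ω ∂μ = (μ {ω | b < W 0 ω}).toReal := by
      rw [hI_def, integral_indicator_const (1:ℝ) hIset, smul_eq_mul, mul_one]
      rfl
    have iY1 : Integrable (fun ω => (t + 4*t^2*Real.exp (t*Λ)*b) * Y ω) μ := by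
      exact hYint.const_mul _
    have iI1 : Integrable (fun ω => (4*t^2*Real.exp (t*Λ)*Λ^2) * I ω) μ := by
      exact hIint.const_mul _
    have hRHSval : (∫ ω, (1 + t * Y ω + 4*t^2*Real.exp (t*Λ) * (b * Y ω + Λ^2 * I ω)) ∂μ)
        = 1 + t*m + 4*t^2*Real.exp (t*Λ) * (b*m + Λ^2 * (μ {ω | b < W 0 ω}).toReal) := by
      calc ∫ ω, (1 + t * Y ω + 4*t^2*Real.exp (t*Λ) * (b * Y ω + Λ^2 * I ω)) ∂μ
          = ∫ ω, (1 + ((t + 4*t^2*Real.exp (t*Λ)*b) * Y ω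
              + (4*t^2*Real.exp (t*Λ)*Λ^2) * I ω)) ∂μ := by
            congr 1; funext ω; ring
        _ = (∫ _ω, (1:ℝ) ∂μ) + ∫ ω, ((t + 4*t^2*Real.exp (t*Λ)*b) * Y ω
              + (4*t^2*Real.exp (t*Λ)*Λ^2) * I ω) ∂μ :=
            integral_add (integrable_const 1) (by exact iY1.add iI1)
        _ = (∫ _ω, (1:ℝ) ∂μ) + ((∫ ω, (t + 4*t^2*Real.exp (t*Λ)*b) * Y ω ∂μ)
              + ∫ ω, (4*t^2*Real.exp (t*Λ)*Λ^2) * I ω ∂μ) := by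
            rw [integral_add iY1 iI1]
        _ = 1 + ((t + 4*t^2*Real.exp (t*Λ)*b) * m
              + (4*t^2*Real.exp (t*Λ)*Λ^2) * (μ {ω | b < W 0 ω}).toReal) := by
            rw [integral_const_mul, integral_const_mul, integral_const, hIval]
            simp [← hm_def]
        _ = 1 + t*m + 4*t^2*Real.exp (t*Λ) * (b*m + Λ^2 * (μ {ω | b < W 0 ω}).toReal) := by
            ring
    have hmgf0 : ProbabilityTheory.mgf (X 0) μ t
        ≤ 1 + t*m + 4*t^2*Real.exp (t*Λ) * (b*m + Λ^2 * (K * b^(-a))) := by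
      have hint := integral_mono hX0int hRHSint hptw
      rw [hRHSval] at hint
      have htl := htail' b hbx
      have hstep : 1 + t*m + 4*t^2*Real.exp (t*Λ) * (b*m + Λ^2 * (μ {ω | b < W 0 ω}).toReal)
          ≤ 1 + t*m + 4*t^2*Real.exp (t*Λ) * (b*m + Λ^2 * (K * b^(-a))) := by
        gcongr
      exact le_trans hint hstep
    set D : ℝ := 4*t^2*Real.exp (t*Λ) * (b*m + Λ^2 * (K * b^(-a))) with hD_def
    have hD0 : 0 ≤ D := by
      rw [hD_def]
      have h1 : 0 ≤ b^(-a) := Real.rpow_nonneg hb0.le _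
      exact mul_nonneg (by positivity)
        (add_nonneg (mul_nonneg hb0.le hm.le)
          (mul_nonneg (sq_nonneg _) (mul_nonneg hK.le h1)))
    have hexpΛ : Real.exp (t*Λ) = (n:ℝ)^c := by
      have h1 : t * Λ = c * Real.log n := by
        rw [ht_def, hΛ_def]; field_simp
      rw [h1, Real.rpow_def_of_pos hN0, mul_comm]
    have hbma : b^(-a) = (n:ℝ)^(-(a*β)) := by
      rw [hb_def, ← Real.rpow_mul hN0.le]; ring_nf
    have E1 : (n:ℝ)^(β+c-1) = (n:ℝ)^β * (n:ℝ)^c / (n:ℝ) := by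
      rw [show β+c-1 = β+c+(-1) by ring, Real.rpow_add hN0, Real.rpow_add hN0,
        Real.rpow_neg_one]
      ring
    have E2 : (n:ℝ)^(1+c-a*β) = (n:ℝ) * ((n:ℝ)^c * (n:ℝ)^(-(a*β))) := by
      rw [show 1+c-a*β = 1+(c+(-(a*β))) by ring, Real.rpow_add hN0, Real.rpow_add hN0,
        Real.rpow_one]
    have hNDeq : (n:ℝ) * D = (4*c^2*m/φ^2) * (Real.log n)^2 * (n:ℝ)^(β+c-1)
        + (4*c^2*K) * (Real.log n)^2 * (n:ℝ)^(1+c-a*β) := by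
      rw [hD_def, hexpΛ, hbma, E1, E2, ht_def, hΛ_def, hb_def]
      field_simp
    have hND1 : (n:ℝ) * D ≤ 1 := by
      rw [hNDeq]; exact hD1
    have h1 : (ProbabilityTheory.mgf (X 0) μ t)^n ≤ Real.exp ((n:ℝ)*(t*m + D)) := by
      calc (ProbabilityTheory.mgf (X 0) μ t)^n ≤ (1 + t*m + D)^n :=
          pow_le_pow_left₀ ProbabilityTheory.mgf_nonneg hmgf0 n
        _ ≤ (Real.exp (t*m + D))^n := by
            apply pow_le_pow_left₀
            · have := mul_nonneg ht.le hm.le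
              linarith
            · linarith [Real.add_one_le_exp (t*m + D)]
        _ = Real.exp ((n:ℝ)*(t*m + D)) := by rw [← Real.exp_nat_mul]
    have key : (μ {ω | 2*m*(n:ℝ) ≤ (∑ i ∈ Finset.range n, X i) ω}).toReal
        ≤ Real.exp 1 * (n:ℝ)^(-(c*m/φ)) := by
      calc (μ {ω | 2*m*(n:ℝ) ≤ (∑ i ∈ Finset.range n, X i) ω}).toReal
          ≤ Real.exp (-t*(2*m*(n:ℝ)))
            * ProbabilityTheory.mgf (∑ i ∈ Finset.range n, X i) μ t := chern
        _ = Real.exp (-t*(2*m*(n:ℝ))) * (ProbabilityTheory.mgf (X 0) μ t)^n := by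
            rw [hmgfS]
        _ ≤ Real.exp (-t*(2*m*(n:ℝ))) * Real.exp ((n:ℝ)*(t*m + D)) :=
            mul_le_mul_of_nonneg_left h1 (Real.exp_pos _).le
        _ = Real.exp (-(c*m/φ)*Real.log n + (n:ℝ)*D) := by
            rw [← Real.exp_add]
            congr 1
            rw [ht_def]
            field_simp
            ring
        _ ≤ Real.exp (-(c*m/φ)*Real.log n + 1) := Real.exp_le_exp.2 (by linarith)
        _ = Real.exp 1 * (n:ℝ)^(-(c*m/φ)) := by
            rw [Real.exp_add, Real.rpow_def_of_pos hN0]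
            ring_nf
    have hmeasle : (μ {ω | 2 * m * (n:ℝ) <
        ∑ i ∈ Finset.range n, (if R ≤ W i ω ∧ W i ω < Λ then W i ω else 0)}).toReal
        ≤ (μ {ω | 2*m*(n:ℝ) ≤ (∑ i ∈ Finset.range n, X i) ω}).toReal := by
      apply ENNReal.toReal_mono (measure_ne_top μ _)
      apply measure_mono
      intro ω hω
      simp only [Set.mem_setOf_eq, Finset.sum_apply] at *
      exact le_of_lt hω
    calc (n:ℝ)^C * (μ {ω | 2 * m * (n:ℝ) <
          ∑ i ∈ Finset.range n, (if R ≤ W i ω ∧ W i ω < Λ then W i ω else 0)}).toReal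
        ≤ (n:ℝ)^C * (Real.exp 1 * (n:ℝ)^(-(c*m/φ))) :=
          mul_le_mul_of_nonneg_left (le_trans hmeasle key)
            (Real.rpow_nonneg (Nat.cast_nonneg n) C)
      _ = Real.exp 1 * (n:ℝ)^(C - c*m/φ) := by
          rw [show C - c*m/φ = C + (-(c*m/φ)) by ring, Real.rpow_add hN0]
          ring
  · have h0 : Tendsto (fun x : ℝ => x ^ (-(c*m/φ - C))) atTop (nhds 0) :=
      tendsto_rpow_neg_atTop (by linarith)
    have h1 := (h0.comp tendsto_natCast_atTop_atTop).const_mul (Real.exp 1)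
    simp only [mul_zero] at h1
    refine h1.congr (fun n => ?_)
    simp only [Function.comp]
    congr 2
    ring
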